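/- For each integer n ≥ 0, the classical Bernoulli number satisfies B_n = Σ_{j=0}^{n} (−1)^j · (C(n+1, j+1)/C(n+j, j)) · S(n+j, j), where S denotes Stirling numbers of the second kind. -/

import Mathlib

open Finset

/-- Stirling numbers of the second kind `S(n,k)`. -/
def stirling : ℕ → ℕ → ℕ
  | 0, 0 => 1
  | 0, _ + 1 => 0
  | _ + 1, 0 => 0
  | n + 1, k + 1 => (k + 1) * stirling n (k + 1) + stirling n k

lemma stirling_zero_right (n : ℕ) : stirling n 0 = if n = 0 then 1 else 0 := by
  cases n <;> simp [stirling]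

lemma stirling_eq_zero_of_lt : ∀ {n k : ℕ}, n < k → stirling n k = 0
  | 0, k + 1, _ => by simp [stirling]
  | n + 1, k + 1, h => by
    rw [stirling, stirling_eq_zero_of_lt (by omega), stirling_eq_zero_of_lt (by omega)]
    simp

lemma stirling_vert (n j : ℕ) :
    (j + 1) * stirling n (j + 1) = ∑ k ∈ range n, n.choose k * stirling k j := by
  induction n generalizing j with
  | zero => simp [stirling]
  | succ n ih =>
    have e1 : ∀ k, (n + 1).choose (k + 1) = n.choose k + n.choose (k + 1) :=
      fun k => Nat.choose_succ_succ n k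
    have e3 : ∑ k ∈ range n, n.choose (k + 1) * stirling (k + 1) j + stirling 0 j
        = (j + 1) * stirling n (j + 1) + stirling n j := by
      have h1 := sum_range_succ' (fun k => n.choose k * stirling k j) n
      have h2 := sum_range_succ (fun k => n.choose k * stirling k j) n
      simp only [Nat.choose_zero_right, one_mul, Nat.choose_self] at h1 h2
      rw [← ih] at h2
      omega
    have key : ∑ k ∈ range (n + 1), (n + 1).choose k * stirling k j
        = (∑ k ∈ range n, n.choose k * stirling (k + 1) j)
          + ((j + 1) * stirling n (j + 1) + stirling n j) := by
      rw [sum_range_succ']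
      simp only [e1, Nat.add_mul, sum_add_distrib, Nat.choose_zero_right, one_mul]
      rw [add_assoc, e3]; ring
    rw [key]
    cases j with
    | zero =>
      have z : ∀ k, stirling (k + 1) 0 = 0 := fun k => rfl
      simp only [z, mul_zero, sum_const_zero, zero_add]
      have : stirling (n + 1) 1 = 1 * stirling n 1 + stirling n 0 := rfl
      rw [this]; ring
    | succ j' =>
      have srec : ∀ k, stirling (k + 1) (j' + 1) = (j' + 1) * stirling k (j' + 1) + stirling k j' :=
        fun k => rfl
      have A : ∑ k ∈ range n, n.choose k * stirling (k + 1) (j' + 1)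
          = (j' + 1) * ((j' + 1 + 1) * stirling n (j' + 1 + 1)) + (j' + 1) * stirling n (j' + 1) := by
        calc ∑ k ∈ range n, n.choose k * stirling (k + 1) (j' + 1)
            = ∑ k ∈ range n, ((j' + 1) * (n.choose k * stirling k (j' + 1))
                + n.choose k * stirling k j') := by
              refine sum_congr rfl fun k _ => ?_; rw [srec]; ring
          _ = (j' + 1) * ∑ k ∈ range n, n.choose k * stirling k (j' + 1)
                + ∑ k ∈ range n, n.choose k * stirling k j' := by
              rw [sum_add_distrib, mul_sum]
          _ = _ := by rw [← ih, ← ih]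
      rw [A]
      have : stirling (n + 1) (j' + 1 + 1)
          = (j' + 1 + 1) * stirling n (j' + 1 + 1) + stirling n (j' + 1) := rfl
      rw [this]; ring


lemma stirling_vert' (n j : ℕ) :
    (j + 1) * stirling (n + j + 1) (j + 1)
      = ∑ k ∈ range (n + 1), (n + j + 1).choose (j + k) * stirling (j + k) j := by
  rw [stirling_vert]
  have h : n + j + 1 = j + (n + 1) := by ring
  rw [h, sum_range_add]
  have z : ∀ x ∈ range j, (j + (n + 1)).choose x * stirling x j = 0 := by
    intro x hx
    rw [stirling_eq_zero_of_lt (mem_range.mp hx), mul_zero]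
  rw [sum_congr rfl z]
  simp

noncomputable def u (n j : ℕ) : ℚ := (stirling (n + j) j : ℚ) / ((n + j).choose j : ℚ)

lemma choose_cast_ne (n j : ℕ) : ((n + j).choose j : ℚ) ≠ 0 := by
  have := Nat.choose_pos (show j ≤ n + j by omega)
  positivity

lemma coeff_id (n j k : ℕ) (hk : k ≤ n) :
    ((n + j + 1).choose (j + k) : ℚ) / (((j : ℚ) + 1) * ((n + j + 1).choose (j + 1)))
      = (n.choose k : ℚ) / (((k + j).choose j : ℚ) * (((n - k : ℕ) : ℚ) + 1)) := by
  obtain ⟨m, rfl⟩ := Nat.exists_eq_add_of_le hk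
  have s0 : k + m - k = m := by omega
  rw [s0]
  rw [Nat.cast_choose ℚ (show j + k ≤ k + m + j + 1 by omega),
      Nat.cast_choose ℚ (show j + 1 ≤ k + m + j + 1 by omega),
      Nat.cast_choose ℚ (show k ≤ k + m by omega),
      Nat.cast_choose ℚ (show j ≤ k + j by omega)]
  have s1 : k + m + j + 1 - (j + k) = m + 1 := by omega
  have s2 : k + m + j + 1 - (j + 1) = k + m := by omega
  have s3 : k + m - k = m := by omega
  have s4 : k + j - j = k := by omega
  rw [s1, s2, s3, s4]
  have hne : ∀ a : ℕ, (Nat.factorial a : ℚ) ≠ 0 := fun a => Nat.cast_ne_zero.mpr (Nat.factorial_ne_zero a)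
  rw [Nat.factorial_succ (m), Nat.factorial_succ (j)]
  push_cast
  field_simp
  ring_nf

lemma u_rec (n j : ℕ) :
    u n (j + 1) = ∑ k ∈ range (n + 1), (n.choose k : ℚ) * u k j / (((n - k : ℕ) : ℚ) + 1) := by
  have hC : ((n + j + 1).choose (j + 1) : ℚ) ≠ 0 := choose_cast_ne n (j + 1)
  have hj : ((j : ℚ) + 1) ≠ 0 := by positivity
  have L : (((j : ℚ) + 1) * stirling (n + j + 1) (j + 1))
      = ∑ k ∈ range (n + 1), ((n + j + 1).choose (j + k) : ℚ) * (stirling (j + k) j : ℚ) := by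
    exact_mod_cast congrArg (Nat.cast : ℕ → ℚ) (stirling_vert' n j)
  calc u n (j + 1)
      = (((j : ℚ) + 1) * stirling (n + j + 1) (j + 1))
          / (((j : ℚ) + 1) * ((n + j + 1).choose (j + 1))) := by
        rw [mul_div_mul_left _ _ hj]; rfl
    _ = (∑ k ∈ range (n + 1), ((n + j + 1).choose (j + k) : ℚ) * (stirling (j + k) j : ℚ))
          / (((j : ℚ) + 1) * ((n + j + 1).choose (j + 1))) := by rw [L]
    _ = ∑ k ∈ range (n + 1), ((n + j + 1).choose (j + k) : ℚ)
          / (((j : ℚ) + 1) * ((n + j + 1).choose (j + 1))) * (stirling (j + k) j : ℚ) := by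
        rw [sum_div]; exact sum_congr rfl fun k _ => by ring
    _ = ∑ k ∈ range (n + 1), (n.choose k : ℚ) * u k j / (((n - k : ℕ) : ℚ) + 1) := by
        refine sum_congr rfl fun k hk => ?_
        rw [coeff_id n j k (by have := mem_range.mp hk; omega)]
        rw [u, show j + k = k + j from Nat.add_comm j k]
        have h1 : ((k + j).choose j : ℚ) ≠ 0 := choose_cast_ne k j
        have h2 : (((n - k : ℕ) : ℚ) + 1) ≠ 0 := by positivity
        field_simp

lemma u_zero (n : ℕ) : u n 0 = if n = 0 then 1 else 0 := by
  rw [u]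
  rw [stirling_zero_right]
  rcases n with _ | m <;> simp

noncomputable def v (n i : ℕ) : ℚ := if i = 0 then bernoulli n else u n (i - 1)

lemma v_zero (n : ℕ) : v n 0 = bernoulli n := rfl

lemma v_succ (n i : ℕ) : v n (i + 1) = u n i := rfl

lemma v_rec (n i : ℕ) :
    v n (i + 1) = ∑ k ∈ range (n + 1), (n.choose k : ℚ) * v k i / (((n - k : ℕ) : ℚ) + 1) := by
  cases i with
  | succ i' => simp only [v_succ, u_rec n i']
  | zero =>
    rw [v_succ, u_zero]
    have term : ∀ k ∈ range (n + 1),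
        (n.choose k : ℚ) * v k 0 / (((n - k : ℕ) : ℚ) + 1)
          = ((n + 1).choose k : ℚ) * bernoulli k / ((n : ℚ) + 1) := by
      intro k hk
      have hk' : k ≤ n := by have := mem_range.mp hk; omega
      rw [v_zero]
      have hnat : n.choose k * (n + 1) = (n + 1).choose k * ((n - k) + 1) := by
        have h := Nat.choose_mul_succ_eq n k
        have : n + 1 - k = (n - k) + 1 := by omega
        rwa [this] at h
      have hh : (n.choose k : ℚ) * ((n : ℚ) + 1)
          = ((n + 1).choose k : ℚ) * (((n - k : ℕ) : ℚ) + 1) := by exact_mod_cast hnat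
      have d1 : (((n - k : ℕ) : ℚ) + 1) ≠ 0 := by positivity
      have d2 : ((n : ℚ) + 1) ≠ 0 := by positivity
      rw [div_eq_div_iff d1 d2]
      calc (n.choose k : ℚ) * bernoulli k * ((n : ℚ) + 1)
          = ((n.choose k : ℚ) * ((n : ℚ) + 1)) * bernoulli k := by ring
        _ = (((n + 1).choose k : ℚ) * (((n - k : ℕ) : ℚ) + 1)) * bernoulli k := by rw [hh]
        _ = _ := by ring
    rw [sum_congr rfl term]
    have : ∑ k ∈ range (n + 1), ((n + 1).choose k : ℚ) * bernoulli k / ((n : ℚ) + 1)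
        = (∑ k ∈ range (n + 1), ((n + 1).choose k : ℚ) * bernoulli k) / ((n : ℚ) + 1) := by
      rw [sum_div]
    rw [this, sum_bernoulli]
    rcases n with _ | m
    · norm_num
    · simp

def IsPolyLe (d : ℕ) (g : ℕ → ℚ) : Prop :=
  ∃ p : Polynomial ℚ, p.natDegree ≤ d ∧ ∀ i : ℕ, g i = p.eval (i : ℚ)

lemma IsPolyLe.mono {d d' : ℕ} {g : ℕ → ℚ} (h : IsPolyLe d g) (hd : d ≤ d') :
    IsPolyLe d' g := by
  obtain ⟨p, h1, h2⟩ := h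
  exact ⟨p, h1.trans hd, h2⟩

lemma IsPolyLe.congr {d : ℕ} {g g' : ℕ → ℚ} (h : IsPolyLe d g) (he : ∀ i, g' i = g i) :
    IsPolyLe d g' := by
  obtain ⟨p, h1, h2⟩ := h
  exact ⟨p, h1, fun i => (he i).trans (h2 i)⟩

lemma isPolyLe_const (d : ℕ) (c : ℚ) : IsPolyLe d (fun _ => c) :=
  ⟨Polynomial.C c, by simp, fun i => by simp⟩

lemma IsPolyLe.add {d : ℕ} {g h : ℕ → ℚ} (hg : IsPolyLe d g) (hh : IsPolyLe d h) :
    IsPolyLe d (fun i => g i + h i) := by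
  obtain ⟨p, h1, h2⟩ := hg
  obtain ⟨q, h3, h4⟩ := hh
  exact ⟨p + q, (Polynomial.natDegree_add_le p q).trans (by omega),
    fun i => by simp [h2 i, h4 i]⟩

lemma IsPolyLe.const_mul {d : ℕ} {g : ℕ → ℚ} (hg : IsPolyLe d g) (c : ℚ) :
    IsPolyLe d (fun i => c * g i) := by
  obtain ⟨p, h1, h2⟩ := hg
  refine ⟨Polynomial.C c * p, ?_, fun i => by simp [h2 i]⟩
  exact (Polynomial.natDegree_C_mul_le c p).trans h1

lemma isPolyLe_sum {α : Type} (s : Finset α) (d : ℕ) (f : α → ℕ → ℚ)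
    (h : ∀ a ∈ s, IsPolyLe d (f a)) : IsPolyLe d (fun i => ∑ a ∈ s, f a i) := by
  classical
  induction s using Finset.induction with
  | empty => exact (isPolyLe_const d 0).congr (fun i => by simp)
  | insert _ _ hx ih =>
    rename_i a s
    have := ((h a (mem_insert_self a s)).add (ih (fun b hb => h b (mem_insert_of_mem hb))))
    exact this.congr (fun i => by rw [sum_insert hx])

lemma isPolyLe_faulhaber (e : ℕ) : IsPolyLe (e + 1) (fun i => ∑ t ∈ range i, (t : ℚ) ^ e) := by
  refine ⟨∑ k ∈ range (e + 1),
    Polynomial.C (bernoulli k * ((e + 1).choose k : ℚ) / ((e : ℚ) + 1)) * Polynomial.X ^ (e + 1 - k),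
    ?_, fun i => ?_⟩
  · refine Polynomial.natDegree_sum_le_of_forall_le _ _ fun k hk => ?_
    exact (Polynomial.natDegree_C_mul_le _ _).trans (by rw [Polynomial.natDegree_X_pow]; omega)
  · show (∑ t ∈ range i, (t : ℚ) ^ e) = _
    rw [sum_range_pow i e, Polynomial.eval_finset_sum]
    refine sum_congr rfl fun k hk => ?_
    simp only [Polynomial.eval_mul, Polynomial.eval_C, Polynomial.eval_pow, Polynomial.eval_X]
    ring

lemma IsPolyLe.sum_range {d : ℕ} {g : ℕ → ℚ} (hg : IsPolyLe d g) :
    IsPolyLe (d + 1) (fun i => ∑ t ∈ range i, g t) := by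
  obtain ⟨p, h1, h2⟩ := hg
  have hev : ∀ t : ℕ, g t = ∑ e ∈ range (d + 1), p.coeff e * (t : ℚ) ^ e := by
    intro t
    rw [h2 t, Polynomial.eval_eq_sum_range' (Nat.lt_succ_of_le h1)]
  have : ∀ i : ℕ, (∑ t ∈ range i, g t)
      = ∑ e ∈ range (d + 1), p.coeff e * ∑ t ∈ range i, (t : ℚ) ^ e := by
    intro i
    simp only [hev, Finset.mul_sum]
    rw [Finset.sum_comm]
  refine IsPolyLe.congr ?_ this
  refine isPolyLe_sum _ _ _ fun e he => ?_
  have he' : e + 1 ≤ d + 1 := by have := mem_range.mp he; omega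
  exact ((isPolyLe_faulhaber e).mono he').const_mul _

lemma v_poly (n : ℕ) : IsPolyLe n (v n) := by
  induction n using Nat.strong_induction_on with
  | _ n ih =>
    rcases n with _ | m
    · refine (isPolyLe_const 0 1).congr fun i => ?_
      induction i with
      | zero => simp [v_zero]
      | succ i hi => rw [v_rec]; simpa using hi
    · have diff : ∀ t, v (m + 1) (t + 1)
          = (∑ k ∈ range (m + 1),
              ((m + 1).choose k : ℚ) * v k t / (((m + 1 - k : ℕ) : ℚ) + 1)) + v (m + 1) t := by
        intro t
        rw [v_rec, sum_range_succ]
        simp [Nat.choose_self, Nat.sub_self]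
      have tel : ∀ i, v (m + 1) i = bernoulli (m + 1)
          + ∑ t ∈ range i, (∑ k ∈ range (m + 1),
              ((m + 1).choose k : ℚ) * v k t / (((m + 1 - k : ℕ) : ℚ) + 1)) := by
        intro i
        induction i with
        | zero => simp [v_zero]
        | succ i hi => rw [sum_range_succ, diff i, hi]; ring
      refine IsPolyLe.congr ?_ tel
      refine (isPolyLe_const _ _).add (IsPolyLe.sum_range ?_)
      refine isPolyLe_sum _ _ _ fun k hk => ?_
      have hk' : k ≤ m := by have := mem_range.mp hk; omega
      have := ((ih k (by omega)).mono hk').const_mul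
        (((m + 1).choose k : ℚ) / (((m + 1 - k : ℕ) : ℚ) + 1))
      exact this.congr fun t => by ring

section FD
open Polynomial

lemma degree_drop (p : Polynomial ℚ) (hp : 1 ≤ p.natDegree) :
    (p.comp (X + 1) - p).natDegree < p.natDegree := by
  have hp0 : p ≠ 0 := fun h => by simp [h] at hp
  have hX : (X + 1 : Polynomial ℚ) = X + C 1 := by rw [map_one]
  have hXdeg : (X + 1 : Polynomial ℚ).natDegree = 1 := by rw [hX]; exact natDegree_X_add_C 1
  have hnd : (p.comp (X + 1)).natDegree = p.natDegree := by
    rw [natDegree_comp, hXdeg, mul_one]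
  have hlc : (p.comp (X + 1)).leadingCoeff = p.leadingCoeff := by
    rw [leadingCoeff_comp (by rw [hXdeg]; omega)]
    have : (X + 1 : Polynomial ℚ).leadingCoeff = 1 := by
      rw [hX]; exact leadingCoeff_X_add_C 1
    rw [this, one_pow, mul_one]
  have hc0 : p.comp (X + 1) ≠ 0 := by
    intro h
    have := hlc
    rw [h, leadingCoeff_zero] at this
    exact hp0 (leadingCoeff_eq_zero.mp this.symm)
  have hdeg : (p.comp (X + 1)).degree = p.degree := by
    rw [degree_eq_natDegree hc0, degree_eq_natDegree hp0, hnd]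
  have := degree_sub_lt hdeg hc0 hlc
  rcases eq_or_ne (p.comp (X + 1) - p) 0 with h0 | h0
  · rw [h0, natDegree_zero]; omega
  · have := natDegree_lt_natDegree h0 (by rwa [hdeg] at this)
    omega

lemma fwdDiff_iter_zero_fun (d : ℕ) : (fwdDiff (1 : ℕ))^[d] (fun _ : ℕ => (0 : ℚ)) = fun _ => 0 := by
  induction d with
  | zero => rfl
  | succ d ih => rw [Function.iterate_succ_apply, show fwdDiff (1 : ℕ) (fun _ : ℕ => (0:ℚ)) = fun _ => 0 from funext fun _ => sub_self 0, ih]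

lemma fwdDiff_poly_zero : ∀ (d : ℕ) (p : Polynomial ℚ), p.natDegree ≤ d →
    (fwdDiff (1 : ℕ))^[d + 1] (fun i : ℕ => p.eval (i : ℚ)) = fun _ => 0 := by
  intro d
  induction d with
  | zero =>
    intro p hp
    obtain ⟨c, rfl⟩ : ∃ c, p = C c := ⟨p.coeff 0, eq_C_of_natDegree_le_zero hp⟩
    funext i
    simp [fwdDiff]
  | succ e ih =>
    intro p hp
    have step : fwdDiff (1 : ℕ) (fun i : ℕ => p.eval (i : ℚ))
        = fun i : ℕ => (p.comp (X + 1) - p).eval (i : ℚ) := by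
      funext i
      simp only [fwdDiff, eval_sub, eval_comp, eval_add, eval_X, eval_one]
      push_cast
      ring_nf
    rw [Function.iterate_succ_apply, step]
    rcases Nat.eq_zero_or_pos p.natDegree with h0 | h1
    · obtain ⟨c, rfl⟩ : ∃ c, p = C c := ⟨p.coeff 0, eq_C_of_natDegree_le_zero (le_of_eq h0)⟩
      have : (C c).comp (X + 1) - C c = 0 := by simp
      rw [this]
      simpa using fwdDiff_iter_zero_fun (e + 1)
    · exact ih _ (by have := degree_drop p h1; omega)

lemma alternating_sum_v (n : ℕ) :
    ∑ k ∈ range (n + 2), (-1 : ℚ) ^ k * ((n + 1).choose k : ℚ) * v n k = 0 := by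
  obtain ⟨p, hd, hev⟩ := v_poly n
  have h0 : (fwdDiff (1 : ℕ))^[n + 1] (fun i : ℕ => v n i) 0 = 0 := by
    rw [funext hev, fwdDiff_poly_zero n p hd]
  rw [fwdDiff_iter_eq_sum_shift] at h0
  have h1 : ∑ k ∈ range (n + 2), (-1 : ℚ) ^ (n + 1 - k) * ((n + 1).choose k : ℚ) * v n k = 0 := by
    rw [← h0]
    refine (sum_congr rfl fun k hk => ?_).symm
    have : (0 : ℕ) + k • 1 = k := by simp
    rw [this, zsmul_eq_mul]
    push_cast
    ring
  have term : ∀ k ∈ range (n + 2), (-1 : ℚ) ^ k * ((n + 1).choose k : ℚ) * v n k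
      = (-1 : ℚ) ^ (n + 1) * ((-1 : ℚ) ^ (n + 1 - k) * ((n + 1).choose k : ℚ) * v n k) := by
    intro k hk
    have hk' : k ≤ n + 1 := by have := mem_range.mp hk; omega
    have e1 : (-1 : ℚ) ^ (n + 1 - k) * (-1 : ℚ) ^ k = (-1 : ℚ) ^ (n + 1) := by
      rw [← pow_add]; congr 1; omega
    have e2 : (-1 : ℚ) ^ (n + 1 - k) * (-1 : ℚ) ^ (n + 1 - k) = 1 := by
      rw [← pow_add]; exact Even.neg_one_pow ⟨n + 1 - k, by ring⟩
    have e3 : (-1 : ℚ) ^ k = (-1 : ℚ) ^ (n + 1) * (-1 : ℚ) ^ (n + 1 - k) := by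
      calc (-1 : ℚ) ^ k
          = ((-1 : ℚ) ^ (n + 1 - k) * (-1 : ℚ) ^ (n + 1 - k)) * (-1 : ℚ) ^ k := by
            rw [e2, one_mul]
        _ = (-1 : ℚ) ^ (n + 1 - k) * ((-1 : ℚ) ^ (n + 1 - k) * (-1 : ℚ) ^ k) := by ring
        _ = _ := by rw [e1]; ring
    rw [e3]; ring
  rw [sum_congr rfl term, ← mul_sum, h1, mul_zero]

end FD

theorem bernoulli_closed_form (n : ℕ) :
    bernoulli n =
      ∑ j ∈ Finset.range (n + 1),
        (-1 : ℚ) ^ j * (((n + 1).choose (j + 1) : ℚ) / ((n + j).choose j : ℚ)) *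
          (stirling (n + j) j : ℚ) := by
  have h := alternating_sum_v n
  rw [sum_range_succ'] at h
  have h0 : (-1 : ℚ) ^ 0 * ((n + 1).choose 0 : ℚ) * v n 0 = bernoulli n := by
    rw [v_zero]; simp
  rw [h0] at h
  have h2 : ∑ k ∈ range (n + 1), (-1 : ℚ) ^ (k + 1) * ((n + 1).choose (k + 1) : ℚ) * v n (k + 1)
      = -∑ j ∈ range (n + 1), (-1 : ℚ) ^ j * ((n + 1).choose (j + 1) : ℚ) * v n (j + 1) := by
    rw [← sum_neg_distrib]
    exact sum_congr rfl fun k _ => by ring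
  rw [h2] at h
  have hb : bernoulli n
      = ∑ j ∈ range (n + 1), (-1 : ℚ) ^ j * ((n + 1).choose (j + 1) : ℚ) * v n (j + 1) := by
    linarith
  rw [hb]
  refine sum_congr rfl fun j hj => ?_
  rw [v_succ, u]
  ring
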